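/- arXiv:2408.01839 — 5 statements merged into one kernel-verified Lean document; each statement's English description precedes it below -/
import Mathlib

section
/- If F: ℝ^d → ℝ is differentiable and for all x in a set X satisfies F(x) - F* ≤ τ ||∇F(x)||^α with α ∈ (1,2] and τ > 0, and the level set {x' : F(x') ≤ F(x)} is contained in X for every x ∈ X, and the set M of global minimizers of F in X is nonempty, then for every x ∈ X, the distance from x to M satisfies inf_{v ∈ M} ||x - v|| ≤ (α/(α-1)) · τ^{1/α} · (F(x) - F*)^{(α-1)/α}. -/
open Filter Topology

-- slope lemma
theorem slope_aux {E : Type*} [NormedAddCommGroup E] [NormedSpace ℝ E]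
    (g : E → ℝ) (y : E) (L : E →L[ℝ] ℝ) (hg : HasFDerivAt g L y)
    (c : ℝ) (hc : 0 ≤ c) (h : ∀ z, g y - c * ‖z - y‖ ≤ g z) : ‖L‖ ≤ c := by
  have key : ∀ v : E, -(c * ‖v‖) ≤ L v := by
    intro v
    have h1 : HasDerivAt (fun s : ℝ => y + s • v) v 0 := by
      simpa using ((hasDerivAt_id (0:ℝ)).smul_const v).const_add y
    have hg' : HasFDerivAt g L (y + (0:ℝ) • v) := by
      simp only [zero_smul, add_zero]; exact hg
    have h2 : HasDerivAt (fun s : ℝ => g (y + s • v)) (L v) 0 := by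
      exact hg'.comp_hasDerivAt (0:ℝ) h1
    have h3 := hasDerivAt_iff_tendsto_slope.mp h2
    have h4 : Tendsto (slope (fun s : ℝ => g (y + s • v)) 0) (𝓝[>] 0) (𝓝 (L v)) :=
      h3.mono_left (nhdsWithin_mono _ (fun s hs => ne_of_gt hs))
    refine ge_of_tendsto h4 ?_
    filter_upwards [self_mem_nhdsWithin] with s hs
    have hs' : (0:ℝ) < s := hs
    have h5 : g y - c * (s * ‖v‖) ≤ g (y + s • v) := by
      simpa [norm_smul, abs_of_pos hs'] using h (y + s • v)
    have h6 : -(c * ‖v‖) ≤ (g (y + s • v) - g y) / s := by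
      rw [le_div_iff₀ hs']; nlinarith
    simpa [slope_def_field] using h6
  refine L.opNorm_le_bound hc (fun v => ?_)
  rw [Real.norm_eq_abs, abs_le]
  constructor
  · simpa using key v
  · have := key (-v)
    simp only [map_neg, norm_neg] at this
    linarith

theorem stmt_0 {d : ℕ} (F : EuclideanSpace ℝ (Fin d) → ℝ) (Fstar α τ : ℝ)
    (hF : Differentiable ℝ F) (hlb : IsGLB (Set.range F) Fstar)
    (X : Set (EuclideanSpace ℝ (Fin d))) (hX : IsClosed X)
    (hα1 : 1 < α) (hα2 : α ≤ 2) (hτ : 0 < τ)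
    (hdom : ∀ x ∈ X, F x - Fstar ≤ τ * ‖gradient F x‖ ^ α)
    (hlev : ∀ x ∈ X, {x' | F x' ≤ F x} ⊆ X)
    (M : Set (EuclideanSpace ℝ (Fin d)))
    (hM : M = {v ∈ X | ∀ y, F v ≤ F y}) (hMne : M.Nonempty) :
    ∀ x ∈ X, Metric.infDist x M ≤
      (α / (α - 1)) * τ ^ (1/α) * (F x - Fstar) ^ ((α - 1)/α) := by
  intro x hx
  have hα0 : (0:ℝ) < α := lt_trans one_pos hα1
  set θ : ℝ := (α - 1)/α with hθdef
  have hθ : 0 < θ := div_pos (by linarith) hα0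
  have hge : ∀ z, Fstar ≤ F z := fun z => hlb.1 ⟨z, rfl⟩
  have hτα : (0:ℝ) < τ ^ (1/α) := Real.rpow_pos_of_pos hτ _
  set m : ℝ := θ / τ ^ (1/α) with hmdef
  have hm : 0 < m := div_pos hθ hτα
  set φ : EuclideanSpace ℝ (Fin d) → ℝ := fun z => (F z - Fstar) ^ θ with hφdef
  have hφ0 : ∀ z, 0 ≤ φ z := fun z => Real.rpow_nonneg (sub_nonneg.2 (hge z)) θ
  by_cases hcase : F x = Fstar
  · have hxM : x ∈ M := by
      rw [hM]; exact ⟨hx, fun z => hcase ▸ hge z⟩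
    have h0 : Metric.infDist x M = 0 := Metric.infDist_zero_of_mem hxM
    rw [h0]
    have h1 : (0:ℝ) ≤ (F x - Fstar) ^ ((α-1)/α) := Real.rpow_nonneg (sub_nonneg.2 (hge x)) _
    have h2 : (0:ℝ) ≤ α / (α - 1) := div_nonneg hα0.le (by linarith)
    exact mul_nonneg (mul_nonneg h2 hτα.le) h1
  · have hr : 0 < F x - Fstar := sub_pos.2 (lt_of_le_of_ne (hge x) (Ne.symm hcase))
    have key : ∀ c, 0 < c → c < m → Metric.infDist x M * c ≤ φ x := by
      intro c hc hcm
      have hφc : Continuous φ :=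
        (hF.continuous.sub continuous_const).rpow_const (fun z => Or.inr hθ.le)
      set ψ : EuclideanSpace ℝ (Fin d) → ℝ := fun z => φ z + c * ‖z - x‖ with hψdef
      have hψc : Continuous ψ :=
        hφc.add (continuous_const.mul ((continuous_id.sub continuous_const).norm))
      have hcoer : Filter.Tendsto ψ (Filter.cocompact _) Filter.atTop := by
        refine Filter.tendsto_atTop_mono ?_
          ((tendsto_dist_right_cocompact_atTop x).const_mul_atTop hc)
        intro z
        have := hφ0 z
        simp only [hψdef, dist_eq_norm]
        linarith
      obtain ⟨y, hy⟩ := hψc.exists_forall_le hcoer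
      have hφyx : φ y + c * ‖y - x‖ ≤ φ x := by
        have := hy x
        simpa [hψdef] using this
      have hFyx : F y ≤ F x := by
        by_contra hlt
        push_neg at hlt
        have : φ x < φ y :=
          Real.rpow_lt_rpow (sub_nonneg.2 (hge x)) (by linarith) hθ
        have hn : 0 ≤ c * ‖y - x‖ := mul_nonneg hc.le (norm_nonneg _)
        linarith
      have hyX : y ∈ X := hlev x hx hFyx
      have hslope : ∀ z, φ y - c * ‖z - y‖ ≤ φ z := by
        intro z
        have h1 := hy z
        have h2 : ‖z - x‖ ≤ ‖z - y‖ + ‖y - x‖ := norm_sub_le_norm_sub_add_norm_sub z y x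
        simp only [hψdef] at h1
        nlinarith [norm_nonneg (z - y)]
      have hFy_star : F y = Fstar := by
        by_contra hne
        have hry : 0 < F y - Fstar := sub_pos.2 (lt_of_le_of_ne (hge y) (Ne.symm hne))
        -- gradient lower bound
        have hd := hdom y hyX
        have hgpos : 0 < ‖gradient F y‖ ^ α := by
          by_contra hg
          push_neg at hg
          have : ‖gradient F y‖ ^ α = 0 :=
            le_antisymm hg (Real.rpow_nonneg (norm_nonneg _) _)
          rw [this] at hd; linarith
        have hglb : ((F y - Fstar)/τ) ^ (1/α) ≤ ‖gradient F y‖ := by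
          have h1 : (F y - Fstar)/τ ≤ ‖gradient F y‖ ^ α := by
            rw [div_le_iff₀ hτ]; linarith [hd]
          calc ((F y - Fstar)/τ) ^ (1/α)
              ≤ (‖gradient F y‖ ^ α) ^ (1/α) :=
                Real.rpow_le_rpow (div_nonneg hry.le hτ.le) h1 (by positivity)
            _ = ‖gradient F y‖ := by
                rw [one_div, Real.rpow_rpow_inv (norm_nonneg _) hα0.ne']
        -- derivative of φ at y
        have hFy : HasFDerivAt F (fderiv ℝ F y) y := (hF y).hasFDerivAt
        have hsub : HasFDerivAt (fun z => F z - Fstar) (fderiv ℝ F y) y := hFy.sub_const _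
        have hrpow : HasDerivAt (fun t : ℝ => t ^ θ) (θ * (F y - Fstar) ^ (θ - 1))
            (F y - Fstar) := Real.hasDerivAt_rpow_const (Or.inl hry.ne')
        have hφd : HasFDerivAt φ ((θ * (F y - Fstar) ^ (θ - 1)) • fderiv ℝ F y) y :=
          by have := hrpow.comp_hasFDerivAt y hsub; exact this
        have hsl := slope_aux φ y _ hφd c hc.le hslope
        have hk : 0 < θ * (F y - Fstar) ^ (θ - 1) :=
          mul_pos hθ (Real.rpow_pos_of_pos hry _)
        have hns := norm_smul (θ * (F y - Fstar) ^ (θ - 1)) (fderiv ℝ F y)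
        rw [hns, Real.norm_eq_abs, abs_of_pos hk] at hsl
        have hgradnorm : ‖fderiv ℝ F y‖ = ‖gradient F y‖ := by
          unfold gradient
          exact (LinearIsometryEquiv.norm_map _ _).symm
        rw [hgradnorm] at hsl
        -- compute lower bound on the product
        have hmain : m ≤ θ * (F y - Fstar) ^ (θ - 1) * ‖gradient F y‖ := by
          have h2 : θ * (F y - Fstar) ^ (θ - 1) * ((F y - Fstar)/τ) ^ (1/α)
              ≤ θ * (F y - Fstar) ^ (θ - 1) * ‖gradient F y‖ :=
            mul_le_mul_of_nonneg_left hglb hk.le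
          have h3 : (F y - Fstar) ^ (θ - 1) * ((F y - Fstar)/τ) ^ (1/α)
              = 1 / τ ^ (1/α) := by
            rw [Real.div_rpow hry.le hτ.le, ← mul_div_assoc,
              ← Real.rpow_add hry]
            have : θ - 1 + 1/α = 0 := by
              rw [hθdef]; field_simp; ring
            rw [this, Real.rpow_zero]
          calc m = θ * ((F y - Fstar) ^ (θ - 1) * ((F y - Fstar)/τ) ^ (1/α)) := by
                rw [h3, hmdef]; ring
            _ = θ * (F y - Fstar) ^ (θ - 1) * ((F y - Fstar)/τ) ^ (1/α) := by ring
            _ ≤ _ := h2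
        linarith
      have hyM : y ∈ M := by
        rw [hM]; exact ⟨hyX, fun z => hFy_star ▸ hge z⟩
      have hφy : φ y = 0 := by
        simp only [hφdef, hFy_star, sub_self]
        exact Real.zero_rpow hθ.ne'
      have hdist : Metric.infDist x M ≤ ‖y - x‖ := by
        have h := Metric.infDist_le_dist_of_mem (x := x) hyM
        rwa [dist_eq_norm, norm_sub_rev] at h
      calc Metric.infDist x M * c ≤ ‖y - x‖ * c := by
            exact mul_le_mul_of_nonneg_right hdist hc.le
        _ = c * ‖y - x‖ := mul_comm _ _
        _ ≤ φ x := by linarith [hφyx, hφy.symm.le, hφy ▸ hφyx]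
    -- pass to the limit c → m
    have hlim : Metric.infDist x M * m ≤ φ x := by
      have htend : Filter.Tendsto (fun c => Metric.infDist x M * c) (nhdsWithin m (Set.Iio m))
          (nhds (Metric.infDist x M * m)) :=
        (tendsto_const_nhds.mul Filter.tendsto_id).mono_left nhdsWithin_le_nhds
      refine le_of_tendsto htend ?_
      filter_upwards [Ioo_mem_nhdsLT_of_mem (⟨hm, le_refl m⟩ : m ∈ Set.Ioc 0 m)] with c hc
      exact key c hc.1 hc.2
    have hfinal : Metric.infDist x M ≤ φ x / m := by
      rw [le_div_iff₀ hm]; exact hlim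
    refine hfinal.trans (le_of_eq ?_)
    rw [hmdef, hθdef]
    have hα1' : α - 1 ≠ 0 := by linarith
    field_simp
    ring
end

section
/- Let F: ℝ^d → ℝ be differentiable whose gradient satisfies the (L,β)-Hölder condition ||∇F(x) - ∇F(y)|| ≤ L||x - y||^{1/(β-1)} for β > 2 (or β = 2, i.e. L-smooth). If additionally F(x) - F* ≤ τ||∇F(x)||^α holds for all x in a closed set X with 1 ≤ α < β, then for every x ∈ X the suboptimality gap is uniformly bounded: F(x) - F* ≤ β^{α/(β-α)} · L^{α(β-1)/(β-α)} · τ^{β/(β-α)}. -/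
open Real RealInnerProductSpace

lemma descent_aux {d : ℕ} (F : EuclideanSpace ℝ (Fin d) → ℝ)
    (hF : Differentiable ℝ F) (L ν : ℝ) (hL : 0 < L) (hν : 0 < ν)
    (hHolder : ∀ x y, ‖gradient F x - gradient F y‖ ≤ L * ‖x - y‖ ^ ν)
    (x v : EuclideanSpace ℝ (Fin d)) :
    F (x + v) ≤ F x + ⟪gradient F x, v⟫ + L * ‖v‖ ^ (1+ν) / (1+ν) := by
  have h1ν : (0:ℝ) < 1 + ν := by linarith
  rcases eq_or_ne v 0 with rfl | hv
  · simp only [add_zero, inner_zero_right]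
    have : (0:ℝ) ≤ L * ‖(0 : EuclideanSpace ℝ (Fin d))‖ ^ (1+ν) / (1+ν) := by positivity
    linarith
  have hvn : (0:ℝ) < ‖v‖ := norm_pos_iff.mpr hv
  set c : ℝ → EuclideanSpace ℝ (Fin d) := fun t => x + t • v with hc
  have hcd : ∀ t : ℝ, HasDerivAt c v t := by
    intro t
    have : HasDerivAt (fun t : ℝ => t • v) ((1:ℝ) • v) t :=
      (hasDerivAt_id t).smul_const v
    simpa [hc] using this.const_add x
  have hFc : ∀ t : ℝ, HasDerivAt (fun t => F (c t)) ⟪gradient F (c t), v⟫ t := by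
    intro t
    have hg := (hF (c t)).hasGradientAt
    have := hg.hasFDerivAt.comp_hasDerivAt t (hcd t)
    simpa [InnerProductSpace.toDual_apply_apply, Function.comp_def] using this
  set ψ : ℝ → ℝ := fun t => F (c t) - t * ⟪gradient F x, v⟫
      - L * ‖v‖ ^ (1+ν) * t ^ (1+ν) / (1+ν) with hψ
  have hψd : ∀ t ∈ Set.Ioo (0:ℝ) 1, HasDerivAt ψ
      (⟪gradient F (c t) - gradient F x, v⟫ - L * ‖v‖ ^ (1+ν) * t ^ ν) t := by
    intro t ht
    have hrp : HasDerivAt (fun t : ℝ => t ^ (1+ν)) ((1+ν) * t ^ (1+ν-1)) t :=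
      Real.hasDerivAt_rpow_const (Or.inl ht.1.ne')
    have h2 : HasDerivAt (fun t : ℝ => t * ⟪gradient F x, v⟫) ⟪gradient F x, v⟫ t := by
      simpa using (hasDerivAt_id t).mul_const ⟪gradient F x, v⟫
    have h3 : HasDerivAt (fun t : ℝ => L * ‖v‖ ^ (1+ν) * t ^ (1+ν) / (1+ν))
        (L * ‖v‖ ^ (1+ν) * ((1+ν) * t ^ (1+ν-1)) / (1+ν)) t :=
      ((hrp.const_mul (L * ‖v‖ ^ (1+ν))).div_const (1+ν))
    have := ((hFc t).sub h2).sub h3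
    have hexp : (1:ℝ) + ν - 1 = ν := by ring
    rw [hexp] at this
    have heq : ⟪gradient F (c t), v⟫ - ⟪gradient F x, v⟫
        - L * ‖v‖ ^ (1+ν) * ((1+ν) * t ^ ν) / (1+ν)
        = ⟪gradient F (c t) - gradient F x, v⟫ - L * ‖v‖ ^ (1+ν) * t ^ ν := by
      rw [inner_sub_left]
      field_simp
    rw [heq] at this
    exact this
  have hψcont : ContinuousOn ψ (Set.Icc 0 1) := by
    apply ContinuousOn.sub
    apply ContinuousOn.sub
    · exact (hF.continuous.comp (by continuity)).continuousOn
    · exact (continuous_id.mul continuous_const).continuousOn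
    · apply ContinuousOn.div_const
      apply ContinuousOn.mul continuousOn_const
      intro t _
      exact (Real.continuousAt_rpow_const t (1+ν) (Or.inr h1ν.le)).continuousWithinAt
  have hanti : AntitoneOn ψ (Set.Icc 0 1) := by
    apply antitoneOn_of_hasDerivWithinAt_nonpos (convex_Icc 0 1) hψcont
    · intro t ht
      rw [interior_Icc] at ht ⊢
      exact ((hψd t ht).hasDerivWithinAt)
    · intro t ht
      rw [interior_Icc] at ht
      have hin : ⟪gradient F (c t) - gradient F x, v⟫
          ≤ ‖gradient F (c t) - gradient F x‖ * ‖v‖ := real_inner_le_norm _ _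
      have hH := hHolder (c t) x
      have hct : c t - x = t • v := by simp [hc]
      rw [hct] at hH
      have hnt : ‖t • v‖ = t * ‖v‖ := by
        rw [norm_smul, Real.norm_eq_abs, abs_of_pos ht.1]
      rw [hnt] at hH
      have hmul : (t * ‖v‖) ^ ν = t ^ ν * ‖v‖ ^ ν :=
        Real.mul_rpow ht.1.le hvn.le
      have hvpow : ‖v‖ ^ (1+ν) = ‖v‖ * ‖v‖ ^ ν := by
        rw [Real.rpow_add hvn, Real.rpow_one]
      have : ⟪gradient F (c t) - gradient F x, v⟫ ≤ L * ‖v‖ ^ (1+ν) * t ^ ν := by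
        calc ⟪gradient F (c t) - gradient F x, v⟫
            ≤ ‖gradient F (c t) - gradient F x‖ * ‖v‖ := hin
          _ ≤ L * (t * ‖v‖) ^ ν * ‖v‖ := by
              apply mul_le_mul_of_nonneg_right hH hvn.le
          _ = L * ‖v‖ ^ (1+ν) * t ^ ν := by rw [hmul, hvpow]; ring
      linarith
  have h01 : (0:ℝ) ≤ 1 := zero_le_one
  have := hanti (Set.left_mem_Icc.mpr h01) (Set.right_mem_Icc.mpr h01) h01
  have hψ0 : ψ 0 = F x := by
    simp [hψ, hc, Real.zero_rpow (by positivity : (1:ℝ)+ν ≠ 0)]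
  have hψ1 : ψ 1 = F (x + v) - ⟪gradient F x, v⟫ - L * ‖v‖ ^ (1+ν) / (1+ν) := by
    simp [hψ, hc, Real.one_rpow]
  rw [hψ0, hψ1] at this
  linarith


theorem stmt_2 {d : ℕ} (F : EuclideanSpace ℝ (Fin d) → ℝ) (Fstar L β α τ : ℝ)
    (hF : Differentiable ℝ F) (hlb : IsGLB (Set.range F) Fstar)
    (hL : 0 < L) (hβ : 2 ≤ β) (hτ : 0 < τ) (hα1 : 1 ≤ α) (hαβ : α < β)
    (hHolder : ∀ x y, ‖gradient F x - gradient F y‖ ≤ L * ‖x - y‖ ^ (1/(β-1)))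
    (X : Set (EuclideanSpace ℝ (Fin d))) (hX : IsClosed X)
    (hdom : ∀ x ∈ X, F x - Fstar ≤ τ * ‖gradient F x‖ ^ α) :
    ∀ x ∈ X, F x - Fstar ≤
      β ^ (α/(β-α)) * L ^ (α*(β-1)/(β-α)) * τ ^ (β/(β-α)) := by
  intro x hx
  have hβ0 : (0:ℝ) < β := by linarith
  have hb1 : (0:ℝ) < β - 1 := by linarith
  have hba : (0:ℝ) < β - α := by linarith
  have hα0 : (0:ℝ) < α := by linarith
  have hRHS : (0:ℝ) ≤ β ^ (α/(β-α)) * L ^ (α*(β-1)/(β-α)) * τ ^ (β/(β-α)) := by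
    have h1 := Real.rpow_pos_of_pos hβ0 (α/(β-α))
    have h2 := Real.rpow_pos_of_pos hL (α*(β-1)/(β-α))
    have h3 := Real.rpow_pos_of_pos hτ (β/(β-α))
    positivity
  set ν : ℝ := 1/(β-1) with hνdef
  have hν : 0 < ν := by positivity
  have hFx : Fstar ≤ F x := hlb.1 ⟨x, rfl⟩
  set g : EuclideanSpace ℝ (Fin d) := gradient F x with hg
  set a : ℝ := ‖g‖ with ha
  rcases eq_or_lt_of_le (norm_nonneg g) with ha0 | ha0
  · -- gradient is zero
    have := hdom x hx
    have ha0' : a = 0 := by rw [ha, ← ha0]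
    rw [← ha, ha0', Real.zero_rpow (by linarith : α ≠ 0)] at this
    simp at this
    linarith
  -- gradient nonzero
  set G : ℝ := F x - Fstar with hG
  have hG0 : 0 ≤ G := by simp [hG]; linarith
  -- key inequality : a ^ β ≤ β * L ^ (β-1) * G
  have key : a ^ β ≤ β * L ^ (β-1) * G := by
    set t0 : ℝ := L ^ (1-β) * a ^ (β-2) with ht0
    have ht0p : 0 < t0 := by
      have := Real.rpow_pos_of_pos hL (1-β)
      have := Real.rpow_pos_of_pos ha0 (β-2)
      positivity
    have hdesc := descent_aux F hF L ν hL hν hHolder x (-(t0 • g))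
    have hFv : Fstar ≤ F (x + -(t0 • g)) := hlb.1 ⟨_, rfl⟩
    have hinner : ⟪g, -(t0 • g)⟫ = -(t0 * a ^ 2) := by
      rw [inner_neg_right, real_inner_smul_right, real_inner_self_eq_norm_sq]
    have hnv : ‖-(t0 • g)‖ = t0 * a := by
      rw [norm_neg, norm_smul, Real.norm_eq_abs, abs_of_pos ht0p]
    have h1ν : 1 + ν = β/(β-1) := by rw [hνdef]; field_simp; ring
    -- t0 * a ^ 2 = L^(1-β) * a^β
    have eqA : t0 * a ^ 2 = L ^ (1-β) * a ^ β := by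
      have h2 : a ^ (β-2) * a ^ (2:ℕ) = a ^ β := by
        rw [← Real.rpow_natCast a 2, ← Real.rpow_add ha0]
        norm_num
        rfl
      rw [ht0, mul_assoc, h2]
    -- L * (t0*a)^(1+ν)/(1+ν) = L^(1-β)*a^β*(β-1)/β
    have eqB : L * (t0 * a) ^ (1+ν) / (1+ν) = L ^ (1-β) * a ^ β * (β-1) / β := by
      have hta : t0 * a = L ^ (1-β) * a ^ (β-1) := by
        have h2 : a ^ (β-2) * a ^ (1:ℝ) = a ^ (β-1) := by
          rw [ha, ← Real.rpow_add ha0]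
          congr 1; ring
        rw [ht0, mul_assoc, ← h2, Real.rpow_one]
      have e1 : (1-β)*(1+ν) = -β := by
        rw [hνdef]; field_simp; ring
      have e2 : (β-1)*(1+ν) = β := by
        rw [hνdef]; field_simp; ring
      have hpow : (t0 * a) ^ (1+ν) = L ^ (-β) * a ^ β := by
        rw [hta, Real.mul_rpow (by positivity) (by positivity),
          ← Real.rpow_mul hL.le, ← Real.rpow_mul ha0.le, e1, e2]
      have hLL : L * L ^ (-β) = L ^ (1-β) := by
        nth_rewrite 1 [← Real.rpow_one L]
        rw [← Real.rpow_add hL]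
        congr 1 <;> ring
      rw [hpow, h1ν, ← mul_assoc, hLL]
      field_simp
    -- combine
    have hstep : L ^ (1-β) * a ^ β / β ≤ G := by
      have := hdesc
      rw [hinner, hnv, eqB] at this
      have hcomb : L ^ (1-β) * a ^ β - L ^ (1-β) * a ^ β * (β-1)/β ≤ G := by
        rw [← eqA]
        have : Fstar ≤ F x - t0 * a ^ 2 + L ^ (1-β) * a ^ β * (β-1) / β := by
          rw [eqA]; linarith
        rw [eqA] at this ⊢
        simp only [hG]
        linarith
      have heq : L ^ (1-β) * a ^ β - L ^ (1-β) * a ^ β * (β-1)/β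
          = L ^ (1-β) * a ^ β / β := by field_simp; ring
      linarith
    have hLpow : L ^ (β-1) * L ^ (1-β) = 1 := by
      rw [← Real.rpow_add hL]; norm_num
    have hcalc : β * L ^ (β-1) * (L ^ (1-β) * a ^ β / β)
        = (L ^ (β-1) * L ^ (1-β)) * a ^ β := by
      field_simp
    rw [hLpow, one_mul] at hcalc
    calc a ^ β = β * L ^ (β-1) * (L ^ (1-β) * a ^ β / β) := hcalc.symm
      _ ≤ β * L ^ (β-1) * G := by
          apply mul_le_mul_of_nonneg_left hstep
          have := Real.rpow_pos_of_pos hL (β-1)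
          positivity
  -- now final algebra
  rcases le_or_gt G 0 with hGle | hGpos
  · calc F x - Fstar = G := rfl
      _ ≤ 0 := hGle
      _ ≤ _ := hRHS
  set s : ℝ := α/β with hs
  have hs0 : 0 < s := by positivity
  set B : ℝ := β * L ^ (β-1) with hB
  have hBpos : 0 < B := by
    have := Real.rpow_pos_of_pos hL (β-1)
    positivity
  have step1 : a ^ α ≤ (B * G) ^ s := by
    have hβs : β * s = α := by rw [hs]; field_simp
    have h1 : a ^ α = (a ^ β) ^ s := by
      rw [← Real.rpow_mul ha0.le, hβs]
    rw [h1]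
    exact Real.rpow_le_rpow (by positivity) key hs0.le
  have step2 : G ≤ τ * (B ^ s * G ^ s) := by
    have h2 : (B * G) ^ s = B ^ s * G ^ s :=
      Real.mul_rpow hBpos.le hG0
    have := hdom x hx
    rw [← ha] at this
    calc G ≤ τ * a ^ α := this
      _ ≤ τ * (B * G) ^ s := by
          exact mul_le_mul_of_nonneg_left step1 hτ.le
      _ = τ * (B ^ s * G ^ s) := by rw [h2]
  have hGs : G = G ^ (1-s) * G ^ s := by
    rw [← Real.rpow_add hGpos]; norm_num
  have step3 : G ^ (1-s) ≤ τ * B ^ s := by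
    have hGsp : 0 < G ^ s := Real.rpow_pos_of_pos hGpos s
    have : G ^ (1-s) * G ^ s ≤ (τ * B ^ s) * G ^ s := by
      rw [← hGs, mul_assoc]; exact step2
    exact le_of_mul_le_mul_right this hGsp
  set r : ℝ := β/(β-α) with hr
  have hrpos : 0 < r := by positivity
  have h1sr : (1-s)*r = 1 := by
    rw [hs, hr]; field_simp
  have hsr : s * r = α/(β-α) := by
    rw [hs, hr]; field_simp
  have final : G ≤ (τ * B ^ s) ^ r := by
    calc G = (G ^ (1-s)) ^ r := by
          rw [← Real.rpow_mul hGpos.le, h1sr, Real.rpow_one]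
      _ ≤ (τ * B ^ s) ^ r := by
          apply Real.rpow_le_rpow (by positivity) step3 hrpos.le
  have hexpand : (τ * B ^ s) ^ r
      = β ^ (α/(β-α)) * L ^ (α*(β-1)/(β-α)) * τ ^ (β/(β-α)) := by
    have hBsr : (B ^ s) ^ r = β ^ (α/(β-α)) * L ^ (α*(β-1)/(β-α)) := by
      rw [← Real.rpow_mul hBpos.le, hsr, hB,
        Real.mul_rpow hβ0.le (by positivity), ← Real.rpow_mul hL.le]
      congr 1
      ring
    rw [Real.mul_rpow hτ.le (by positivity), hBsr, hr]
    ring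
  calc F x - Fstar = G := rfl
    _ ≤ (τ * B ^ s) ^ r := final
    _ = _ := by rw [hexpand]
end

section
/- There is no differentiable function F: ℝ^d → ℝ with a nonempty bounded set of global minimizers that is simultaneously L-smooth (gradient L-Lipschitz) and (α,τ)-gradient-dominated on all of ℝ^d for any exponent α strictly between 1 and 2. -/
open Real

lemma key_rpow_aux {a b p : ℝ} (ha : 0 < a) (hb : 0 ≤ b) (hba : b ≤ a)
    (hp0 : 0 < p) (hp1 : p ≤ 1) : p * (a - b) ≤ (a ^ p - b ^ p) * a ^ (1 - p) := by
  have hs : (-1 : ℝ) ≤ (b - a) / a := by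
    rw [le_div_iff₀ ha]; linarith
  have hbern := rpow_one_add_le_one_add_mul_self hs hp0.le hp1
  have h1 : (1 : ℝ) + (b - a) / a = b / a := by field_simp; ring
  rw [h1, Real.div_rpow hb ha.le] at hbern
  have hap : (0:ℝ) < a ^ p := Real.rpow_pos_of_pos ha p
  have ha1p : (0:ℝ) < a ^ (1 - p) := Real.rpow_pos_of_pos ha (1-p)
  have hmul : a ^ p * a ^ (1 - p) = a := by
    rw [← Real.rpow_add ha]; norm_num
  have h3 : b ^ p ≤ a ^ p * (1 + p * ((b - a) / a)) :=
    calc b ^ p = a ^ p * (b ^ p / a ^ p) := by field_simp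
    _ ≤ a ^ p * (1 + p * ((b - a) / a)) := mul_le_mul_of_nonneg_left hbern hap.le
  have h5 : (-(a ^ p * (p * ((b - a) / a)))) * a ^ (1 - p) ≤ (a ^ p - b ^ p) * a ^ (1 - p) := by
    apply mul_le_mul_of_nonneg_right _ ha1p.le
    linarith
  have h6 : (-(a ^ p * (p * ((b - a) / a)))) * a ^ (1 - p) = p * (a - b) := by
    have h7 : (-(a ^ p * (p * ((b - a) / a)))) * a ^ (1 - p)
        = p * (a - b) * (a ^ p * a ^ (1 - p)) / a := by ring
    rw [h7, hmul]
    field_simp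
  linarith

lemma step_bound_aux {L τ α p T a b s : ℝ} (hL : 0 < L) (hτ : 0 < τ) (hα0 : 0 < α)
    (hp0 : 0 < p) (hp1 : p ≤ 1) (h1p : 1 - p = α⁻¹) (hTeq : T = τ ^ (α⁻¹))
    (hb0 : 0 ≤ b) (hs0 : 0 ≤ s) (hba : b ≤ a)
    (hgsq : s ^ 2 ≤ 4*L*(a - b)) (hg2 : s ^ 2 ≤ 4*L*a) (hdm : a ≤ τ * s ^ α) :
    (1/(2*L)) * s ≤ (2*T/p) * (a ^ p - b ^ p) := by
  have hT0 : 0 < T := hTeq ▸ Real.rpow_pos_of_pos hτ _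
  have ha0 : 0 ≤ a := hb0.trans hba
  have hΔ : 0 ≤ a ^ p - b ^ p := by
    have h2 := Real.rpow_le_rpow hb0 hba hp0.le
    linarith
  rcases eq_or_lt_of_le hs0 with h0 | hgpos
  · rw [← h0, mul_zero]
    have := mul_le_mul_of_nonneg_left hΔ (show (0:ℝ) ≤ 2*T/p by positivity)
    linarith [this]
  · have ha : 0 < a := by nlinarith
    have hkey := key_rpow_aux ha hb0 hba hp0 hp1
    rw [h1p] at hkey
    have hglb : a ^ (α⁻¹) ≤ s * T := by
      have h2 := Real.rpow_le_rpow ha0 hdm (inv_nonneg.mpr hα0.le)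
      rw [Real.mul_rpow hτ.le (Real.rpow_nonneg hs0 _),
        ← Real.rpow_mul hs0, mul_inv_cancel₀ hα0.ne', Real.rpow_one] at h2
      rw [hTeq, mul_comm]
      exact h2
    have h8 : p * (a - b) ≤ (a ^ p - b ^ p) * (s * T) :=
      hkey.trans (mul_le_mul_of_nonneg_left hglb hΔ)
    have k1 := mul_le_mul_of_nonneg_left hgsq hp0.le
    have k2 := mul_le_mul_of_nonneg_left h8 (show (0:ℝ) ≤ 4*L by positivity)
    have h7 : p * (s ^ 2) ≤ 4*L*((a ^ p - b ^ p) * (s * T)) := by linarith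
    have h10 : (p * s) * s ≤ (4*L*T*(a ^ p - b ^ p)) * s := by nlinarith [h7]
    have h11 : p * s ≤ 4*L*T*(a ^ p - b ^ p) := le_of_mul_le_mul_right h10 hgpos
    rw [show (1/(2*L)) * s = (p * s) / (2*L*p) by field_simp]
    rw [show (2*T/p) * (a ^ p - b ^ p) = (4*L*T*(a ^ p - b ^ p)) / (2*L*p) by
      field_simp; ring]
    exact (div_le_div_iff_of_pos_right (by positivity)).mpr h11

lemma grad_bound_aux {L τ α s : ℝ} (hL : 0 < L) (hτ : 0 < τ) (hα2 : α < 2) (hα0 : 0 < α)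
    (hs0 : 0 ≤ s) (h : s ^ 2 ≤ 4*L*τ * s ^ α) :
    s ≤ max 1 ((4*L*τ) ^ ((2-α)⁻¹)) := by
  rcases le_or_gt s 1 with h1 | h1
  · exact h1.trans (le_max_left _ _)
  · have hpos : (0:ℝ) < s := lt_trans one_pos h1
    have h2 : s ^ (2:ℝ) ≤ 4*L*τ * s ^ α := by
      rw [show ((2:ℝ)) = ((2:ℕ):ℝ) by norm_num, Real.rpow_natCast]
      exact h
    have h3 : s ^ ((2:ℝ)-α) ≤ 4*L*τ := by
      rw [Real.rpow_sub hpos, div_le_iff₀ (Real.rpow_pos_of_pos hpos α)]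
      exact h2
    have h4 := Real.rpow_le_rpow (Real.rpow_nonneg hs0 _) h3
      (inv_nonneg.mpr (by linarith : (0:ℝ) ≤ 2-α))
    rw [← Real.rpow_mul hs0, mul_inv_cancel₀ (by linarith : (2:ℝ)-α ≠ 0),
      Real.rpow_one] at h4
    exact h4.trans (le_max_right _ _)

lemma descent_lemma_aux {E : Type*} [NormedAddCommGroup E] [InnerProductSpace ℝ E]
    [CompleteSpace E]
    {F : E → ℝ} {L : ℝ} (hF : Differentiable ℝ F) (hL : 0 ≤ L)
    (hlip : ∀ x y, ‖gradient F x - gradient F y‖ ≤ L * ‖x - y‖) (x y : E) :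
    F y ≤ F x + inner ℝ (gradient F x) (y - x) + L * ‖y - x‖ ^ 2 := by
  have hfd : ∀ z : E, HasFDerivWithinAt F ((InnerProductSpace.toDual ℝ E) (gradient F z))
      (segment ℝ x y) z :=
    fun z => (hasGradientAt_iff_hasFDerivAt.mp (hF z).hasGradientAt).hasFDerivWithinAt
  have hbound : ∀ z ∈ segment ℝ x y,
      ‖(InnerProductSpace.toDual ℝ E) (gradient F z)
        - (InnerProductSpace.toDual ℝ E) (gradient F x)‖ ≤ L * ‖y - x‖ := by
    rintro z ⟨a, b, ha, hb, hab, rfl⟩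
    rw [← map_sub, LinearIsometryEquiv.norm_map]
    calc ‖gradient F (a • x + b • y) - gradient F x‖ ≤ L * ‖a • x + b • y - x‖ :=
          hlip _ _
    _ ≤ L * ‖y - x‖ := by
        have h1 : a • x + b • y - x = b • (y - x) := by
          have : a = 1 - b := by linarith
          rw [this]; module
        rw [h1, norm_smul, Real.norm_eq_abs, abs_of_nonneg hb]
        have := norm_nonneg (y - x)
        nlinarith [mul_nonneg (mul_nonneg hL this) (show (0:ℝ) ≤ 1 - b by linarith)]
  have key := Convex.norm_image_sub_le_of_norm_hasFDerivWithin_le'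
    (fun z _ => hfd z) hbound (convex_segment x y) (left_mem_segment ℝ x y)
    (right_mem_segment ℝ x y)
  rw [InnerProductSpace.toDual_apply_apply, Real.norm_eq_abs] at key
  have h2 := (abs_le.mp key).2
  nlinarith [sq_nonneg ‖y - x‖]

lemma onestep_aux {E : Type*} [NormedAddCommGroup E] [InnerProductSpace ℝ E]
    [CompleteSpace E]
    {F : E → ℝ} {L : ℝ} (hF : Differentiable ℝ F) (hL : 0 < L)
    (hlip : ∀ x y, ‖gradient F x - gradient F y‖ ≤ L * ‖x - y‖) (x : E) :
    F (x - (1/(2*L)) • gradient F x) ≤ F x - ‖gradient F x‖ ^ 2 / (4*L) := by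
  have hd := descent_lemma_aux hF hL.le hlip x (x - (1/(2*L)) • gradient F x)
  have h1 : x - (1/(2*L)) • gradient F x - x = -((1/(2*L)) • gradient F x) := by abel
  rw [h1] at hd
  rw [inner_neg_right, real_inner_smul_right, real_inner_self_eq_norm_sq] at hd
  rw [norm_neg, norm_smul, Real.norm_eq_abs] at hd
  have hc : |1/(2*L)| = 1/(2*L) := abs_of_pos (by positivity)
  rw [hc] at hd
  have heq : L * (1/(2*L) * ‖gradient F x‖) ^ 2
      = ‖gradient F x‖ ^ 2 / (4*L) := by field_simp; ring
  have heq2 : (1/(2*L)) * ‖gradient F x‖ ^ 2 = 2 * (‖gradient F x‖ ^ 2 / (4*L)) := by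
    field_simp; ring
  linarith

theorem stmt_4 {d : ℕ} (hd : 0 < d) (F : EuclideanSpace ℝ (Fin d) → ℝ)
    (L τ α Fstar : ℝ)
    (hL : 0 < L) (hτ : 0 < τ) (hα1 : 1 < α) (hα2 : α < 2)
    (hF : Differentiable ℝ F) (hlb : IsGLB (Set.range F) Fstar)
    (M : Set (EuclideanSpace ℝ (Fin d)))
    (hM : M = {v | ∀ y, F v ≤ F y}) (hMne : M.Nonempty)
    (hMbd : Bornology.IsBounded M)
    (hlip : ∀ x y, ‖gradient F x - gradient F y‖ ≤ L * ‖x - y‖)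
    (hdom : ∀ x, F x - Fstar ≤ τ * ‖gradient F x‖ ^ α) :
    False := by
  have hα0 : 0 < α := by linarith
  have hFs : ∀ y, Fstar ≤ F y := fun y => hlb.1 (Set.mem_range_self y)
  have hstep : ∀ x, F (x - (1/(2*L)) • gradient F x)
      ≤ F x - ‖gradient F x‖ ^ 2 / (4*L) := onestep_aux hF hL hlip
  -- lower bound on the gap in terms of the gradient
  have hlow : ∀ x, ‖gradient F x‖ ^ 2 ≤ 4*L*(F x - Fstar) := by
    intro x
    have h1 := hstep x
    have h2 := hFs (x - (1/(2*L)) • gradient F x)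
    have h3 : ‖gradient F x‖ ^ 2 / (4*L) ≤ F x - Fstar := by linarith
    calc ‖gradient F x‖ ^ 2 = (‖gradient F x‖ ^ 2 / (4*L)) * (4*L) := by field_simp
    _ ≤ (F x - Fstar) * (4*L) := mul_le_mul_of_nonneg_right h3 (by positivity)
    _ = 4*L*(F x - Fstar) := by ring
  -- uniform bound on the gradient
  obtain ⟨C, hC1, hgb⟩ : ∃ C : ℝ, 1 ≤ C ∧ ∀ x, ‖gradient F x‖ ≤ C := by
    refine ⟨max 1 ((4*L*τ) ^ ((2-α)⁻¹)), le_max_left _ _, fun x => ?_⟩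
    refine grad_bound_aux hL hτ hα2 hα0 (norm_nonneg _) ?_
    calc ‖gradient F x‖ ^ 2 ≤ 4*L*(F x - Fstar) := hlow x
    _ ≤ 4*L*(τ * ‖gradient F x‖ ^ α) :=
        mul_le_mul_of_nonneg_left (hdom x) (by positivity)
    _ = 4*L*τ * ‖gradient F x‖ ^ α := by ring
  have hC0 : (0:ℝ) < C := lt_of_lt_of_le one_pos hC1
  -- uniform bound on the gap
  obtain ⟨B, hB0, hBd⟩ : ∃ B : ℝ, 0 < B ∧ ∀ x, F x - Fstar ≤ B := by
    refine ⟨τ * C ^ α, by positivity, fun x => ?_⟩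
    calc F x - Fstar ≤ τ * ‖gradient F x‖ ^ α := hdom x
    _ ≤ τ * C ^ α := mul_le_mul_of_nonneg_left
        (Real.rpow_le_rpow (norm_nonneg _) (hgb x) hα0.le) hτ.le
  -- constants
  obtain ⟨p, hp0, hp1, h1p⟩ : ∃ p : ℝ, 0 < p ∧ p ≤ 1 ∧ 1 - p = α⁻¹ := by
    refine ⟨1 - α⁻¹, ?_, ?_, by ring⟩
    · have : α⁻¹ < 1 := inv_lt_one_of_one_lt₀ hα1
      linarith
    · have : 0 < α⁻¹ := by positivity
      linarith
  obtain ⟨T, hT0, hTeq⟩ : ∃ T : ℝ, 0 < T ∧ T = τ ^ (α⁻¹) :=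
    ⟨τ ^ (α⁻¹), Real.rpow_pos_of_pos hτ _, rfl⟩
  obtain ⟨K, hK0, hKeq⟩ : ∃ K : ℝ, 0 < K ∧ K = (2*T/p) * B ^ p :=
    ⟨(2*T/p) * B ^ p, by positivity, rfl⟩
  -- bounded minimizer set
  obtain ⟨R, hR⟩ := hMbd.subset_closedBall 0
  -- starting point far away
  obtain ⟨x₀, hx₀norm⟩ : ∃ x₀ : EuclideanSpace ℝ (Fin d), ‖x₀‖ = |R| + K + 1 :=
    ⟨EuclideanSpace.single (⟨0, hd⟩ : Fin d) (|R| + K + 1), by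
      rw [EuclideanSpace.norm_single, Real.norm_eq_abs, abs_of_pos (by positivity)]⟩
  -- the gradient descent sequence
  obtain ⟨seq, hseq0, hseqS⟩ :
      ∃ s : ℕ → EuclideanSpace ℝ (Fin d), s 0 = x₀ ∧
        ∀ n, s (n+1) = s n - (1/(2*L)) • gradient F (s n) :=
    ⟨fun n => Nat.rec x₀ (fun _ z => z - (1/(2*L)) • gradient F z) n, rfl, fun _ => rfl⟩
  obtain ⟨e, he⟩ : ∃ e : ℕ → ℝ, ∀ n, e n = F (seq n) - Fstar := ⟨_, fun _ => rfl⟩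
  have he0 : ∀ n, 0 ≤ e n := by
    intro n; rw [he n]; exact sub_nonneg.mpr (hFs _)
  have hdec : ∀ n, e (n+1) ≤ e n - ‖gradient F (seq n)‖ ^ 2 / (4*L) := by
    intro n
    have h1 := hstep (seq n)
    rw [← hseqS n] at h1
    rw [he n, he (n+1)]
    linarith
  have hg2 : ∀ n, ‖gradient F (seq n)‖ ^ 2 ≤ 4*L*(e n) := by
    intro n; rw [he n]; exact hlow (seq n)
  have hdom' : ∀ n, e n ≤ τ * ‖gradient F (seq n)‖ ^ α := by
    intro n; rw [he n]; exact hdom (seq n)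
  have hba : ∀ n, e (n+1) ≤ e n := by
    intro n
    have h1 := hdec n
    have h2 : 0 ≤ ‖gradient F (seq n)‖ ^ 2 / (4*L) := by positivity
    linarith
  have hstepnorm : ∀ n, ‖seq (n+1) - seq n‖ = (1/(2*L)) * ‖gradient F (seq n)‖ := by
    intro n
    rw [hseqS n]
    have h1 : seq n - (1/(2*L)) • gradient F (seq n) - seq n
        = -((1/(2*L)) • gradient F (seq n)) := by abel
    rw [h1, norm_neg, norm_smul, Real.norm_eq_abs, abs_of_pos (by positivity)]
  have hgsq : ∀ n, ‖gradient F (seq n)‖ ^ 2 ≤ 4*L*(e n - e (n+1)) := by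
    intro n
    have h1 := hdec n
    have h2 : ‖gradient F (seq n)‖ ^ 2 / (4*L) * (4*L) = ‖gradient F (seq n)‖ ^ 2 := by
      field_simp
    nlinarith
  -- per-step length bound
  have claim : ∀ n, ‖seq (n+1) - seq n‖ ≤ (2*T/p) * ((e n) ^ p - (e (n+1)) ^ p) := by
    intro n
    rw [hstepnorm n]
    exact step_bound_aux hL hτ hα0 hp0 hp1 h1p hTeq (he0 (n+1)) (norm_nonneg _)
      (hba n) (hgsq n) (hg2 n) (hdom' n)
  -- telescoping: the whole trajectory stays in a ball of radius K
  have htel : ∀ n, ‖seq n - x₀‖ ≤ (2*T/p) * ((e 0) ^ p - (e n) ^ p) := by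
    intro n
    induction n with
    | zero => simp [hseq0]
    | succ n ih =>
      have h1 : ‖seq (n+1) - x₀‖ ≤ ‖seq (n+1) - seq n‖ + ‖seq n - x₀‖ :=
        norm_sub_le_norm_sub_add_norm_sub _ _ _
      have h2 := claim n
      linarith
  have hKbd : ∀ n, ‖seq n - x₀‖ ≤ K := by
    intro n
    have h1 := htel n
    have h2' : e 0 ≤ B := by rw [he 0]; exact hBd _
    have h2 : (e 0) ^ p ≤ B ^ p := Real.rpow_le_rpow (he0 0) h2' hp0.le
    have h3 : 0 ≤ (e n) ^ p := Real.rpow_nonneg (he0 n) p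
    calc ‖seq n - x₀‖ ≤ (2*T/p) * ((e 0) ^ p - (e n) ^ p) := h1
    _ ≤ (2*T/p) * B ^ p := mul_le_mul_of_nonneg_left (by linarith) (by positivity)
    _ = K := hKeq.symm
  -- convergence of e to 0
  have hanti : Antitone e := antitone_nat_of_succ_le hba
  have hbdd : BddBelow (Set.range e) := ⟨0, fun y ⟨n, hn⟩ => hn ▸ he0 n⟩
  have hconv : Filter.Tendsto e Filter.atTop (nhds (⨅ n, e n)) :=
    tendsto_atTop_ciInf hanti hbdd
  have hconv' : Filter.Tendsto (fun n => e (n+1)) Filter.atTop (nhds (⨅ n, e n)) :=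
    hconv.comp (Filter.tendsto_add_atTop_nat 1)
  have hdiff : Filter.Tendsto (fun n => e n - e (n+1)) Filter.atTop (nhds 0) := by
    simpa using hconv.sub hconv'
  have hg2to : Filter.Tendsto (fun n => ‖gradient F (seq n)‖ ^ 2) Filter.atTop (nhds 0) := by
    refine squeeze_zero (fun n => sq_nonneg _) (fun n => hgsq n) ?_
    simpa using hdiff.const_mul (4*L)
  have hgto : Filter.Tendsto (fun n => ‖gradient F (seq n)‖) Filter.atTop (nhds 0) := by
    have h := (Real.continuous_sqrt.tendsto 0).comp hg2to
    simp only [Function.comp_def, Real.sqrt_zero] at h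
    exact h.congr (fun n => Real.sqrt_sq (norm_nonneg _))
  have hgαto : Filter.Tendsto (fun n => τ * ‖gradient F (seq n)‖ ^ α) Filter.atTop (nhds 0) := by
    have hc : ContinuousAt (fun x : ℝ => x ^ α) 0 :=
      Real.continuousAt_rpow_const 0 α (Or.inr hα0.le)
    have h := hc.tendsto.comp hgto
    simp only [Function.comp_def, Real.zero_rpow hα0.ne'] at h
    simpa using h.const_mul τ
  have heto : Filter.Tendsto e Filter.atTop (nhds 0) := squeeze_zero he0 hdom' hgαto
  -- minimize F on the compact ball around x₀
  obtain ⟨z, hzball, hzmin⟩ := (isCompact_closedBall x₀ K).exists_isMinOn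
    ⟨x₀, Metric.mem_closedBall_self hK0.le⟩ (hF.continuous.continuousOn)
  have hseqball : ∀ n, seq n ∈ Metric.closedBall x₀ K := fun n => by
    rw [Metric.mem_closedBall, dist_eq_norm]; exact hKbd n
  have hzF : F z ≤ Fstar := by
    have h1 : Filter.Tendsto (fun n => F (seq n)) Filter.atTop (nhds Fstar) := by
      have h2 := heto.add_const Fstar
      rw [zero_add] at h2
      refine h2.congr (fun n => ?_)
      rw [he n]; ring
    exact ge_of_tendsto' h1 (fun n => hzmin (hseqball n))
  have hzM : z ∈ M := by
    rw [hM]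
    exact fun y => hzF.trans (hFs y)
  have hzR : ‖z‖ ≤ |R| := by
    have h1 := hR hzM
    rw [Metric.mem_closedBall, dist_zero_right] at h1
    exact h1.trans (le_abs_self R)
  have hx₀z : ‖x₀ - z‖ ≤ K := by
    rw [Metric.mem_closedBall] at hzball
    rw [← dist_eq_norm, dist_comm]
    exact hzball
  have hfinal : ‖x₀‖ ≤ ‖x₀ - z‖ + ‖z‖ := by
    calc ‖x₀‖ = ‖(x₀ - z) + z‖ := by rw [sub_add_cancel]
    _ ≤ ‖x₀ - z‖ + ‖z‖ := norm_add_le _ _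
  rw [hx₀norm] at hfinal
  linarith
end

section
/- Let {δₜ}ₜ≥0 be a nonnegative sequence satisfying δ_{t+1} ≤ δₜ + (ηₜσ²)/(2bₜ) - (ηₜ/(2τ^{2/α})) δₜ^{2/α}, with ηₜ = η₀(t+1)^{-γ}, bₜ = b₀(t+1)^b, γ ∈ [0,1), and b = 2(1-γ)/(2-α) with 1 ≤ α < 2. Then δ_T = O(T^{-β}) with β = α(1-γ)/(2-α); i.e., there is a constant C (depending on the parameters and δ₀) such that δ_T ≤ C · T^{-β} for all T ≥ 1. -/
set_option maxHeartbeats 1000000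

open Real

lemma bern_neg (h p : ℝ) (hh : 0 < h) (hp : 0 ≤ p) : 1 - p*h ≤ (1+h)^(-p) := by
  rcases le_or_gt (1 - p*h) 0 with hc | hc
  · exact hc.trans (Real.rpow_nonneg (by linarith) _)
  · have h1 : 1 - p*h ≤ Real.exp (-(p*h)) := by
      have := Real.add_one_le_exp (-(p*h)); linarith
    have h2 : Real.exp (-(p*h)) = (Real.exp h) ^ (-p) := by
      rw [Real.rpow_def_of_pos (Real.exp_pos h), Real.log_exp]; ring_nf
    have h3 : (Real.exp h) ^ (-p) ≤ (1+h)^(-p) :=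
      Real.rpow_le_rpow_of_nonpos (by linarith) (by linarith [Real.add_one_le_exp h]) (by linarith)
    linarith [h2 ▸ h1]

lemma diff_bound (x p : ℝ) (hx : 1 ≤ x) (hp : 0 ≤ p) :
    x^(-p) - (x+1)^(-p) ≤ p * x^(-p-1) := by
  have hx0 : (0:ℝ) < x := by linarith
  have key : x^(-p) * (1 - p * (1/x)) ≤ (x+1)^(-p) := by
    have hb := bern_neg (1/x) p (by positivity) hp
    have e : (x+1)^(-p) = x^(-p) * (1+1/x)^(-p) := by
      rw [← Real.mul_rpow (le_of_lt hx0) (by positivity)]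
      congr 1
      field_simp
    rw [e]
    exact mul_le_mul_of_nonneg_left hb (Real.rpow_nonneg hx0.le _)
  have e2 : x^(-p) * (p * (1/x)) = p * x^(-p-1) := by
    rw [sub_eq_add_neg (-p) 1, Real.rpow_add hx0, Real.rpow_neg_one]
    field_simp
  nlinarith [key, e2]

lemma aux_decay (δ : ℕ → ℝ) (β a c2 e : ℝ) (hβ : 0 < β) (ha : 0 < a) (hc2 : 0 < c2)
    (he1 : 1 < e) (he2 : e ≤ 2) (hδ : ∀ t, 0 ≤ δ t)
    (hrec : ∀ t : ℕ, δ (t+1) ≤ δ t + a*((t:ℝ)+1)^(-(β+1))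
      - c2*((t:ℝ)+1)^(β*e-(β+1)) * (δ t)^e) :
    ∃ C : ℝ, ∀ T : ℕ, 1 ≤ T → δ T ≤ C * (T:ℝ)^(-β) := by
  obtain ⟨M, hMdef⟩ : ∃ x:ℝ, x = max 1 (4*(β*(2:ℝ)^(β+1)+a)/c2) := ⟨_, rfl⟩
  have hM1 : (1:ℝ) ≤ M := by rw [hMdef]; exact le_max_left _ _
  obtain ⟨C, hCdef⟩ : ∃ x:ℝ, x = max (M^((1:ℝ)/(e-1))) (max (δ 1) (max 1 (2*a))) := ⟨_, rfl⟩
  have hC1 : (1:ℝ) ≤ C := by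
    rw [hCdef]
    exact le_trans (le_trans (le_max_left _ _) (le_max_right _ _)) (le_max_right _ _)
  have hC0 : (0:ℝ) < C := lt_of_lt_of_le one_pos hC1
  have hCδ : δ 1 ≤ C := by rw [hCdef]; exact le_trans (le_max_left _ _) (le_max_right _ _)
  have hC2a : 2*a ≤ C := by
    rw [hCdef]
    exact le_trans (le_trans (le_max_right _ _) (le_max_right _ _)) (le_max_right _ _)
  have he0 : (0:ℝ) < e - 1 := by linarith
  have hCM : M ≤ C^(e-1) := by
    have h1 : M^((1:ℝ)/(e-1)) ≤ C := by rw [hCdef]; exact le_max_left _ _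
    have h2 : (M^((1:ℝ)/(e-1)))^(e-1) ≤ C^(e-1) :=
      Real.rpow_le_rpow (Real.rpow_nonneg (by linarith) _) h1 (by linarith)
    rw [← Real.rpow_mul (by linarith : (0:ℝ) ≤ M)] at h2
    have he : (1:ℝ)/(e-1)*(e-1) = 1 := by field_simp
    rwa [he, Real.rpow_one] at h2
  have hKey : C*β*(2:ℝ)^(β+1) + a ≤ c2 * (C/2)^e := by
    have hQ0 : (0:ℝ) < (2:ℝ)^e := Real.rpow_pos_of_pos two_pos _
    have hQ4 : (2:ℝ)^e ≤ 4 := by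
      have h1 : (2:ℝ)^e ≤ (2:ℝ)^(2:ℝ) :=
        Real.rpow_le_rpow_of_exponent_le one_le_two he2
      have h2 : (2:ℝ)^(2:ℝ) = 4 := by
        rw [show (2:ℝ) = ((2:ℕ):ℝ) by norm_num, Real.rpow_natCast]; norm_num
      linarith
    have hP : (0:ℝ) < C^(e-1) := Real.rpow_pos_of_pos hC0 _
    have hsplit : C^e = C * C^(e-1) := by
      rw [show e = 1 + (e-1) by ring, Real.rpow_add hC0, Real.rpow_one]; ring_nf
    have hdivp : (C/2)^e = C^e / (2:ℝ)^e :=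
      Real.div_rpow hC0.le (by norm_num : (0:ℝ) ≤ 2) _
    have hMq : 4*(β*(2:ℝ)^(β+1)+a) ≤ c2 * M := by
      have h := le_max_right (1:ℝ) (4*(β*(2:ℝ)^(β+1)+a)/c2)
      rw [← hMdef, div_le_iff₀ hc2] at h
      linarith [h]
    have s2' : C*M ≤ C*C^(e-1) := mul_le_mul_of_nonneg_left hCM hC0.le
    have s4 : C*M/4 ≤ C*C^(e-1)/(2:ℝ)^e := by
      have t1 : C*M/4 ≤ C*C^(e-1)/4 := by linarith
      have t2 : C*C^(e-1)/4 ≤ C*C^(e-1)/(2:ℝ)^e :=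
        div_le_div_of_nonneg_left (by positivity) hQ0 hQ4
      linarith
    have s5 : c2*(C*M/4) ≤ c2*(C*C^(e-1)/(2:ℝ)^e) :=
      mul_le_mul_of_nonneg_left s4 hc2.le
    have s6 : C*(β*(2:ℝ)^(β+1)+a) ≤ c2*(C*M/4) := by nlinarith [hMq, hC0]
    have s7 : C*β*(2:ℝ)^(β+1) + a ≤ C*(β*(2:ℝ)^(β+1)+a) := by nlinarith [hC1, ha]
    have s8 : c2 * (C/2)^e = c2*(C*C^(e-1)/(2:ℝ)^e) := by rw [hdivp, hsplit]
    linarith [s5, s6, s7, s8.ge]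
  refine ⟨C, ?_⟩
  intro T hT
  induction T, hT using Nat.le_induction with
  | base =>
      simp only [Nat.cast_one]
      rw [Real.one_rpow]
      linarith [hCδ]
  | succ t ht IH =>
      have hs1 : (1:ℝ) ≤ (t:ℝ) := by exact_mod_cast ht
      have hs0 : (0:ℝ) < (t:ℝ) := by linarith
      have hsp : (0:ℝ) < (t:ℝ)+1 := by linarith
      push_cast
      have hrec' := hrec t
      have hAt : a * ((t:ℝ)+1)^(-(β+1)) ≤ C/2 * ((t:ℝ)+1)^(-β) := by
        have h1 : ((t:ℝ)+1)^(-(β+1)) ≤ ((t:ℝ)+1)^(-β) :=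
          Real.rpow_le_rpow_of_exponent_le (by linarith) (by linarith)
        exact mul_le_mul (by linarith) h1 (Real.rpow_nonneg hsp.le _) (by linarith)
      by_cases hcase : δ t ≤ C/2 * ((t:ℝ)+1)^(-β)
      · have hneg : 0 ≤ c2 * ((t:ℝ)+1)^(β*e-(β+1)) * (δ t)^e :=
          mul_nonneg (mul_nonneg hc2.le (Real.rpow_nonneg hsp.le _)) (Real.rpow_nonneg (hδ t) _)
        linarith [hrec', hAt, hcase, hneg]
      · push_neg at hcase
        have hδt : δ t ≤ C * (t:ℝ)^(-β) := IH
        have hlow : (C/2 * ((t:ℝ)+1)^(-β))^e ≤ (δ t)^e :=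
          Real.rpow_le_rpow (by positivity) hcase.le (by linarith)
        have hpow : (C/2 * ((t:ℝ)+1)^(-β))^e = (C/2)^e * ((t:ℝ)+1)^(-β*e) := by
          rw [Real.mul_rpow (by positivity) (Real.rpow_nonneg hsp.le _),
            ← Real.rpow_mul hsp.le]
        have hcomb : ((t:ℝ)+1)^(β*e-(β+1)) * ((t:ℝ)+1)^(-β*e) = ((t:ℝ)+1)^(-(β+1)) := by
          rw [← Real.rpow_add hsp]
          congr 1
          ring
        have hdrift : c2 * (C/2)^e * ((t:ℝ)+1)^(-(β+1))
            ≤ c2*((t:ℝ)+1)^(β*e-(β+1)) * (δ t)^e := by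
          have hm := mul_le_mul_of_nonneg_left hlow
            (mul_nonneg hc2.le (Real.rpow_nonneg hsp.le (β*e-(β+1))))
          calc c2 * (C/2)^e * ((t:ℝ)+1)^(-(β+1))
              = c2*((t:ℝ)+1)^(β*e-(β+1)) * ((C/2 * ((t:ℝ)+1)^(-β))^e) := by
                rw [hpow, ← hcomb]; ring
            _ ≤ _ := hm
        have hdiff : (t:ℝ)^(-β) - ((t:ℝ)+1)^(-β) ≤ β * (t:ℝ)^(-β-1) :=
          diff_bound _ _ hs1 hβ.le
        have hjump : (t:ℝ)^(-β-1) ≤ (2:ℝ)^(β+1) * ((t:ℝ)+1)^(-(β+1)) := by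
          have h1 : ((t:ℝ)+1)^(β+1) ≤ (2*(t:ℝ))^(β+1) :=
            Real.rpow_le_rpow (by linarith) (by linarith) (by linarith)
          have h2 : (2*(t:ℝ))^(β+1) = (2:ℝ)^(β+1) * (t:ℝ)^(β+1) :=
            Real.mul_rpow (by norm_num) hs0.le
          have hX : (0:ℝ) < (t:ℝ)^(β+1) := Real.rpow_pos_of_pos hs0 _
          have hY : (0:ℝ) < ((t:ℝ)+1)^(β+1) := Real.rpow_pos_of_pos hsp _
          have l1 : (t:ℝ)^(-β-1) = ((t:ℝ)^(β+1))⁻¹ := by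
            rw [← Real.rpow_neg hs0.le]; ring_nf
          have l2 : ((t:ℝ)+1)^(-(β+1)) = (((t:ℝ)+1)^(β+1))⁻¹ := by
            rw [← Real.rpow_neg hsp.le]
          rw [l1, l2, inv_eq_one_div, inv_eq_one_div, mul_one_div, div_le_div_iff₀ hX hY]
          rw [one_mul, ← h2]
          exact h1
        have final : δ (t+1) ≤ C * (t:ℝ)^(-β) + a*((t:ℝ)+1)^(-(β+1))
            - c2*(C/2)^e*((t:ℝ)+1)^(-(β+1)) := by
          linarith [hrec', hdrift, hδt]
        have hstep : C * (t:ℝ)^(-β) ≤ C * ((t:ℝ)+1)^(-β)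
            + C*β*((2:ℝ)^(β+1)*((t:ℝ)+1)^(-(β+1))) := by
          have m1 := mul_le_mul_of_nonneg_left hdiff hC0.le
          have m2 := mul_le_mul_of_nonneg_left hjump (by positivity : (0:ℝ) ≤ C*β)
          linarith [m1, m2]
        have hPnn : (0:ℝ) ≤ ((t:ℝ)+1)^(-(β+1)) := Real.rpow_nonneg hsp.le _
        have m3 := mul_le_mul_of_nonneg_right hKey hPnn
        linarith [final, hstep, m3]

theorem stmt_8 (δ : ℕ → ℝ) (σ τ η₀ b₀ α γ : ℝ)
    (hσ : 0 < σ) (hτ : 0 < τ) (hη : 0 < η₀) (hb : 0 < b₀)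
    (hα1 : 1 ≤ α) (hα2 : α < 2) (hγ1 : 0 ≤ γ) (hγ2 : γ < 1)
    (hδ : ∀ t, 0 ≤ δ t)
    (hrec : ∀ t : ℕ, δ (t+1) ≤ δ t
        + (η₀*((t:ℝ)+1)^(-γ)) * σ^2 / (2*(b₀*((t:ℝ)+1)^(2*(1-γ)/(2-α))))
        - (η₀*((t:ℝ)+1)^(-γ)) / (2*τ^(2/α)) * (δ t)^(2/α)) :
    ∃ C : ℝ, ∀ T : ℕ, 1 ≤ T → δ T ≤ C * (T:ℝ) ^ (-(α*(1-γ)/(2-α))) := by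
  have hα0 : (0:ℝ) < α := lt_of_lt_of_le one_pos hα1
  have h2α : (0:ℝ) < 2 - α := by linarith
  have h1γ : (0:ℝ) < 1 - γ := by linarith
  have hτ2 : (0:ℝ) < τ^(2/α) := Real.rpow_pos_of_pos hτ _
  apply aux_decay δ (α*(1-γ)/(2-α)) (η₀*σ^2/(2*b₀)) (η₀/(2*τ^(2/α))) (2/α)
    (by positivity) (by positivity) (by positivity)
    (by rw [lt_div_iff₀ hα0]; linarith) (by rw [div_le_iff₀ hα0]; linarith) hδ
  intro t
  have hsp : (0:ℝ) < (t:ℝ)+1 := by positivity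
  have e1 : η₀ * ((t:ℝ)+1)^(-γ) * σ^2 / (2*(b₀*((t:ℝ)+1)^(2*(1-γ)/(2-α))))
      = η₀*σ^2/(2*b₀) * ((t:ℝ)+1)^(-(α*(1-γ)/(2-α)+1)) := by
    have hx : ((t:ℝ)+1)^(-γ) / ((t:ℝ)+1)^(2*(1-γ)/(2-α))
        = ((t:ℝ)+1)^(-(α*(1-γ)/(2-α)+1)) := by
      rw [← Real.rpow_sub hsp]
      congr 1
      field_simp
      ring
    have hy : ((t:ℝ)+1)^(2*(1-γ)/(2-α)) ≠ 0 := ne_of_gt (Real.rpow_pos_of_pos hsp _)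
    rw [← hx]
    field_simp
  have e2 : ((t:ℝ)+1)^(-γ) = ((t:ℝ)+1)^(α*(1-γ)/(2-α)*(2/α)-(α*(1-γ)/(2-α)+1)) := by
    congr 1
    field_simp
    ring
  have h := hrec t
  rw [e1] at h
  calc δ (t+1) ≤ _ := h
    _ = δ t + η₀*σ^2/(2*b₀)*((t:ℝ)+1)^(-(α*(1-γ)/(2-α)+1))
        - η₀/(2*τ^(2/α))*((t:ℝ)+1)^(α*(1-γ)/(2-α)*(2/α)-(α*(1-γ)/(2-α)+1)) * (δ t)^(2/α) := by
      rw [← e2]; ring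
end

section
/- Let F be the hard-instance convex function above on [a_{j*}, a_{j*+1}) with derivative F'(x) = pG · |x - R/(2N) - a_{j*}|^{1/(α-1)}·sgn(x - R/(2N) - a_{j*}) / (R/(2N))^{1/(α-1)}. Then F satisfies the local gradient-dominance inequality F(x) - min F ≤ τ |F'(x)|^α for all x ∈ [a_{j*}, a_{j*+1}) whenever τ ≥ ((α-1)/α)·(R/(2N))·(pG)^{1-α}. -/
theorem stmt_17 (p G α R τ : ℝ) (N : ℕ) (a : ℝ)
    (hp1 : 0 < p) (hp2 : p < 1/2) (hG : 0 < G)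
    (hα1 : 1 < α) (hα2 : α ≤ 2) (hR : 0 < R) (hN : 0 < N) (hτ0 : 0 < τ)
    (hτ : ((α-1)/α) * (R/(2*N)) * (p*G) ^ (1-α) ≤ τ) :
    ∀ x ∈ Set.Ico a (a + R/N),
      p*G*((α-1)/α) * |x - R/(2*N) - a| ^ (α/(α-1)) / (R/(2*N)) ^ (1/(α-1)) ≤
        τ * |p*G * |x - R/(2*N) - a| ^ (1/(α-1)) * Real.sign (x - R/(2*N) - a)
              / (R/(2*N)) ^ (1/(α-1))| ^ α := by
  intro x _
  have hα0 : (0:ℝ) < α := by linarith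
  have hαm : (0:ℝ) < α - 1 := by linarith
  have hNpos : (0:ℝ) < (N:ℝ) := Nat.cast_pos.mpr hN
  set h := R/(2*(N:ℝ)) with hh
  have hhpos : 0 < h := by positivity
  set y := x - h - a with hy
  have hpg : 0 < p*G := by positivity
  rcases eq_or_ne y 0 with h0 | h0
  · rw [h0]
    simp [Real.sign_zero, abs_zero, mul_zero, zero_div,
      Real.zero_rpow (ne_of_gt (by positivity : (0:ℝ) < α/(α-1))),
      Real.zero_rpow hα0.ne']
  · have hu : 0 < |y| := abs_pos.mpr h0
    have hsign : |Real.sign y| = 1 := by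
      rcases lt_or_gt_of_ne h0 with h' | h'
      · simp [Real.sign_of_neg h']
      · simp [Real.sign_of_pos h']
    have habs : |p*G * |y|^(1/(α-1)) * Real.sign y / h^(1/(α-1))|
        = p*G * |y|^(1/(α-1)) / h^(1/(α-1)) := by
      rw [abs_div, abs_mul, abs_mul, hsign, mul_one, abs_of_pos hpg,
        abs_of_pos (Real.rpow_pos_of_pos hu _), abs_of_pos (Real.rpow_pos_of_pos hhpos _)]
    rw [habs]
    have hE : (p*G * |y|^(1/(α-1)) / h^(1/(α-1)))^α
        = (p*G)^α * |y|^(α/(α-1)) / h^(α/(α-1)) := by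
      rw [Real.div_rpow (by positivity) (le_of_lt (Real.rpow_pos_of_pos hhpos _)),
        Real.mul_rpow hpg.le (le_of_lt (Real.rpow_pos_of_pos hu _)),
        ← Real.rpow_mul (abs_nonneg y), ← Real.rpow_mul hhpos.le,
        show (1/(α-1))*α = α/(α-1) by ring]
    rw [hE]
    have e1 : (p*G)^(1-α) * (p*G)^α = p*G := by
      rw [← Real.rpow_add hpg]
      norm_num
    have e2 : h^(α/(α-1)) = h * h^(1/(α-1)) := by
      rw [show α/(α-1) = 1 + 1/(α-1) by field_simp; ring, Real.rpow_add hhpos, Real.rpow_one]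
    have key : p*G*((α-1)/α) * |y|^(α/(α-1)) / h^(1/(α-1))
        = (((α-1)/α) * h * (p*G)^(1-α)) * ((p*G)^α * |y|^(α/(α-1)) / h^(α/(α-1))) := by
      rw [e2]
      have h1 : h^(1/(α-1)) ≠ 0 := (Real.rpow_pos_of_pos hhpos _).ne'
      field_simp
      linear_combination -e1
    rw [key]
    exact mul_le_mul_of_nonneg_right hτ (by positivity)
end
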